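/- Suppose the entries of a symmetric matrix $A \in \mathbb{R}^{n \times n}$ satisfy $A_{ij} = h(d(x^*_i, x^*_j))$ for a strictly decreasing function $h$, where $\mathbf{x}^* \in \boldsymbol{\Pi}_n$ is a regular configuration on the circle with every $x_i^*$ in the regular grid $\mathcal{C}_n$. Then for each index $i$, the point $x_i^*$ minimizes $z \mapsto \sum_{j=1}^n A_{ij}\, d(z, x^*_j)$ over $z \in \mathcal{C}_n$. -/

import Mathlib

open Real Finset

/-- Geodesic distance on the unit circle `Circle ⊆ ℂ`. -/
noncomputable def gd (z w : Circle) : ℝ := |Complex.arg ((z : ℂ) / (w : ℂ))|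

/-- A configuration is regular if it enumerates (via some permutation) the
regular `n`-point grid `{e^{2πik/n}}` on the circle. -/
def RegularConfig (n : ℕ) (x : Fin n → Circle) : Prop :=
  ∃ σ : Equiv.Perm (Fin n), ∀ j, x j = Circle.exp (2 * π * ((σ j : Fin n) : ℕ) / n)

lemma gd_mul_right (z u w : Circle) : gd (z * w) (u * w) = gd z u := by
  unfold gd
  congr 2
  push_cast
  rw [mul_div_mul_right _ _ (Circle.coe_ne_zero w)]

lemma gd_nonneg (z w : Circle) : 0 ≤ gd z w := abs_nonneg _

lemma gd_le_pi (z w : Circle) : gd z w ≤ π := Complex.abs_arg_le_pi _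

noncomputable def gridPt (n : ℕ) (k : Fin n) : Circle := Circle.exp (2 * π * (k : ℕ) / n)

lemma gridPt_add {n : ℕ} [NeZero n] (a c : Fin n) :
    gridPt n (a + c) = gridPt n a * gridPt n c := by
  have hn : (n : ℝ) ≠ 0 := Nat.cast_ne_zero.2 (NeZero.ne n)
  rw [gridPt, gridPt, gridPt, ← Circle.exp_add]
  have hval : ((a + c : Fin n) : ℕ) = (a.val + c.val) % n := by
    simp [Fin.add_def]
  apply Circle.exp_eq_exp.2
  refine ⟨-(((a.val + c.val) / n : ℕ) : ℤ), ?_⟩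
  have h1 : (a.val + c.val) % n + n * ((a.val + c.val) / n) = a.val + c.val :=
    Nat.mod_add_div _ _
  have hmod : (((a.val + c.val) % n : ℕ) : ℝ)
      = (a.val : ℝ) + c.val - n * ((a.val + c.val) / n : ℕ) := by
    have h2 := congrArg (Nat.cast (R := ℝ)) h1
    push_cast at h2
    linarith
  rw [hval, hmod, Int.cast_neg, Int.cast_natCast]
  field_simp
  ring

theorem stmt13 (n : ℕ) (h : ℝ → ℝ) (hdec : StrictAntiOn h (Set.Icc 0 π))
    (x : Fin n → Circle) (hx : RegularConfig n x)
    (A : Fin n → Fin n → ℝ) (hA : ∀ i j, A i j = h (gd (x i) (x j)))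
    (i : Fin n) (z : Circle)
    (hz : ∃ k : Fin n, z = Circle.exp (2 * π * (k : ℕ) / n)) :
    ∑ j, A i j * gd (x i) (x j) ≤ ∑ j, A i j * gd z (x j) := by
  haveI : NeZero n := ⟨(Fin.pos i).ne'⟩
  obtain ⟨σ, hσ⟩ := hx
  obtain ⟨k, rfl⟩ := hz
  have hxg : ∀ j, x j = gridPt n (σ j) := fun j => hσ j
  set b : Fin n → ℝ := fun j => gd (x i) (x j) with hb
  set a : Fin n → ℝ := fun j => A i j with ha
  have hmem : ∀ j, b j ∈ Set.Icc (0 : ℝ) π := fun j => ⟨gd_nonneg _ _, gd_le_pi _ _⟩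
  have hanti : Antivary a b := by
    intro p q hpq
    have : h (b q) < h (b p) := hdec (hmem p) (hmem q) hpq
    show A i q ≤ A i p
    rw [hA i p, hA i q]
    exact this.le
  set c : Fin n := σ i - k with hc
  set τ : Equiv.Perm (Fin n) := (σ.trans (Equiv.addRight c)).trans σ.symm with hτ
  have hkey : ∀ j, gd (gridPt n k) (x j) = b (τ j) := by
    intro j
    have hστ : σ (τ j) = σ j + c := by
      simp [hτ, Equiv.trans_apply]
    rw [hb]
    simp only
    rw [hxg i, hxg (τ j), hστ]
    have hki : σ i = k + c := by rw [hc]; abel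
    rw [hki, gridPt_add, gridPt_add, gd_mul_right, ← hxg j]
  calc ∑ j, A i j * gd (x i) (x j) = ∑ j, a j * b j := rfl
    _ ≤ ∑ j, a j * b (τ j) := hanti.sum_mul_le_sum_mul_comp_perm
    _ = ∑ j, A i j * gd (gridPt n k) (x j) := by simp_rw [hkey]; rfl
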